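/- Fix ε > 0 and let a > 0 be sufficiently small. If (u_n,v_n) is a sequence in X_ε with sup_n |J_ε(u_n,v_n)| < ∞ and |⟨J'_ε(u_n,v_n),(u_n,v_n)⟩| ≤ ε_n ‖(u_n,v_n)‖_ε for some sequence ε_n → 0, then sup_n ‖(u_n,v_n)‖_ε < ∞. -/

import Mathlib

open MeasureTheory Real Set Filter

noncomputable section

abbrev Euc (N : ℕ) := EuclideanSpace ℝ (Fin N)

/-- Partial derivative of a two-variable real function in the first variable. -/
def pdU (f : ℝ → ℝ → ℝ) (u v : ℝ) : ℝ := deriv (fun t => f t v) u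

/-- Partial derivative of a two-variable real function in the second variable. -/
def pdV (f : ℝ → ℝ → ℝ) (u v : ℝ) : ℝ := deriv (fun t => f u t) v

/-- Integrand of the Gagliardo seminorm. -/
def gagKer (N : ℕ) (s : ℝ) (u : Euc N → ℝ) (z : Euc N × Euc N) : ℝ :=
  (u z.1 - u z.2) ^ 2 / ‖z.1 - z.2‖ ^ ((N : ℝ) + 2 * s)

/-- Squared Gagliardo seminorm `[u]²`. -/
def gagSq (N : ℕ) (s : ℝ) (u : Euc N → ℝ) : ℝ := ∫ z, gagKer N s u z

/-- Membership in the fractional Sobolev space `H^s(ℝ^N)`. -/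
def MemHs (N : ℕ) (s : ℝ) (u : Euc N → ℝ) : Prop :=
  MemLp u 2 (volume : Measure (Euc N)) ∧ Integrable (gagKer N s u)

/-- The nonlinearity `Q` together with assumptions (Q1)-(Q6); `Q` is `C²` on the closed
first quadrant and extended by `0` outside of it.  Its partial derivatives are `pdU Q`,
`pdV Q`. -/
structure QSetup (p : ℝ) : Type where
  Q : ℝ → ℝ → ℝ
  smooth : ContDiffOn ℝ 2 (fun z : ℝ × ℝ => Q z.1 z.2) (Ici 0 ×ˢ Ici 0)
  ext_zero : ∀ u v : ℝ, u ≤ 0 ∨ v ≤ 0 → Q u v = 0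
  q1 : ∀ t : ℝ, 0 < t → ∀ u v : ℝ, 0 ≤ u → 0 ≤ v → Q (t * u) (t * v) = t ^ p * Q u v
  q2 : ∃ C : ℝ, 0 < C ∧ ∀ u v : ℝ, 0 ≤ u → 0 ≤ v →
        |pdU Q u v| + |pdV Q u v| ≤ C * (u ^ (p - 1) + v ^ (p - 1))
  q3 : pdU Q 0 1 = 0 ∧ pdV Q 1 0 = 0
  q4 : pdU Q 1 0 = 0 ∧ pdV Q 0 1 = 0
  q5 : ∀ u v : ℝ, 0 < u → 0 < v → 0 < Q u v
  q6 : ∀ u v : ℝ, 0 ≤ u → 0 ≤ v → 0 ≤ pdU Q u v ∧ 0 ≤ pdV Q u v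

/-- The potentials `V`, `W`, the set `Λ`, the point `x₀` and `ρ₀`, with (H1)-(H3). -/
structure PotSetup (N : ℕ) : Type where
  V : Euc N → ℝ
  W : Euc N → ℝ
  Λ : Set (Euc N)
  x₀ : Euc N
  ρ₀ : ℝ
  contV : Continuous V
  contW : Continuous W
  openΛ : IsOpen Λ
  bddΛ : Bornology.IsBounded Λ
  x₀mem : x₀ ∈ Λ
  ρ₀pos : 0 < ρ₀
  h1 : ∀ x ∈ frontier Λ, ρ₀ ≤ V x ∧ ρ₀ ≤ W x
  h2 : V x₀ < ρ₀ ∧ W x₀ < ρ₀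
  h3 : (∀ x, V x₀ ≤ V x) ∧ (∀ x, W x₀ ≤ W x) ∧ 0 < V x₀ ∧ 0 < W x₀

/-- `‖(u,v)‖²_ξ` for the autonomous problem with frozen potentials `V(ξ)`, `W(ξ)`. -/
def normSqXi {N : ℕ} (s : ℝ) (P : PotSetup N) (ξ : Euc N) (u v : Euc N → ℝ) : ℝ :=
  gagSq N s u + gagSq N s v + ∫ x, (P.V ξ * u x ^ 2 + P.W ξ * v x ^ 2)

/-- The autonomous energy functional `J_ξ`. -/
def Jxi {N : ℕ} (s : ℝ) {p : ℝ} (QS : QSetup p) (P : PotSetup N) (ξ : Euc N)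
    (u v : Euc N → ℝ) : ℝ :=
  (1 / 2) * normSqXi s P ξ u v - ∫ x, QS.Q (u x) (v x)

/-- The Nehari manifold `N_ξ` of the autonomous functional `J_ξ`. -/
def NehariXi {N : ℕ} (s : ℝ) {p : ℝ} (QS : QSetup p) (P : PotSetup N) (ξ : Euc N) :
    Set ((Euc N → ℝ) × (Euc N → ℝ)) :=
  {w | MemHs N s w.1 ∧ MemHs N s w.2 ∧ w ≠ (0, 0) ∧
    normSqXi s P ξ w.1 w.2 =
      ∫ x, (w.1 x * pdU QS.Q (w.1 x) (w.2 x) + w.2 x * pdV QS.Q (w.1 x) (w.2 x))}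

/-- `C(ξ) = inf_{(u,v) ∈ N_ξ} J_ξ(u,v)`. -/
def Cmin {N : ℕ} (s : ℝ) {p : ℝ} (QS : QSetup p) (P : PotSetup N) (ξ : Euc N) : ℝ :=
  sInf ((fun w : (Euc N → ℝ) × (Euc N → ℝ) => Jxi s QS P ξ w.1 w.2) '' NehariXi s QS P ξ)

/-- The cut-off function `η` used in the penalization, for a given `a > 0`. -/
structure EtaSetup (a cη : ℝ) : Type where
  η : ℝ → ℝ
  smooth : ContDiff ℝ 2 η
  anti : Antitone η
  mem01 : ∀ t, η t ∈ Icc (0 : ℝ) 1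
  eq_one : ∀ t, t ≤ a → η t = 1
  eq_zero : ∀ t, 5 * a ≤ t → η t = 0
  bd1 : ∀ t, |deriv η t| ≤ cη / a
  bd2 : ∀ t, |deriv (deriv η) t| ≤ cη / a ^ 2

/-- `A = max { Q(u,v)/(u²+v²) : a ≤ √(u²+v²) ≤ 5a }`. -/
def Aconst {p : ℝ} (QS : QSetup p) (a : ℝ) : ℝ :=
  sSup ((fun z : ℝ × ℝ => QS.Q z.1 z.2 / (z.1 ^ 2 + z.2 ^ 2)) ''
    {z : ℝ × ℝ | a ≤ Real.sqrt (z.1 ^ 2 + z.2 ^ 2) ∧ Real.sqrt (z.1 ^ 2 + z.2 ^ 2) ≤ 5 * a})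

/-- The penalized nonlinearity `Q̂`. -/
def Qhat {p : ℝ} (QS : QSetup p) (η : ℝ → ℝ) (A u v : ℝ) : ℝ :=
  η (Real.sqrt (u ^ 2 + v ^ 2)) * QS.Q u v +
    (1 - η (Real.sqrt (u ^ 2 + v ^ 2))) * (A * (u ^ 2 + v ^ 2))

/-- The penalized function `H(x,u,v) = χ_Λ(x) Q(u,v) + (1-χ_Λ(x)) Q̂(u,v)`. -/
def Hpen {N : ℕ} {p : ℝ} (QS : QSetup p) (η : ℝ → ℝ) (A : ℝ) (Λ : Set (Euc N))
    (x : Euc N) (u v : ℝ) : ℝ :=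
  Λ.indicator (fun _ => (1 : ℝ)) x * QS.Q u v +
    (1 - Λ.indicator (fun _ => (1 : ℝ)) x) * Qhat QS η A u v

/-- `H_u`. -/
def HpenU {N : ℕ} {p : ℝ} (QS : QSetup p) (η : ℝ → ℝ) (A : ℝ) (Λ : Set (Euc N))
    (x : Euc N) (u v : ℝ) : ℝ := pdU (Hpen QS η A Λ x) u v

/-- `H_v`. -/
def HpenV {N : ℕ} {p : ℝ} (QS : QSetup p) (η : ℝ → ℝ) (A : ℝ) (Λ : Set (Euc N))
    (x : Euc N) (u v : ℝ) : ℝ := pdV (Hpen QS η A Λ x) u v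

/-- `H_uu`. -/
def HpenUU {N : ℕ} {p : ℝ} (QS : QSetup p) (η : ℝ → ℝ) (A : ℝ) (Λ : Set (Euc N))
    (x : Euc N) (u v : ℝ) : ℝ := pdU (HpenU QS η A Λ x) u v

/-- `H_uv`. -/
def HpenUV {N : ℕ} {p : ℝ} (QS : QSetup p) (η : ℝ → ℝ) (A : ℝ) (Λ : Set (Euc N))
    (x : Euc N) (u v : ℝ) : ℝ := pdV (HpenU QS η A Λ x) u v

/-- `H_vv`. -/
def HpenVV {N : ℕ} {p : ℝ} (QS : QSetup p) (η : ℝ → ℝ) (A : ℝ) (Λ : Set (Euc N))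
    (x : Euc N) (u v : ℝ) : ℝ := pdV (HpenV QS η A Λ x) u v

/-- `‖(u,v)‖²_ε`. -/
def normSqE {N : ℕ} (s : ℝ) (P : PotSetup N) (ε : ℝ) (u v : Euc N → ℝ) : ℝ :=
  gagSq N s u + gagSq N s v + ∫ x, (P.V (ε • x) * u x ^ 2 + P.W (ε • x) * v x ^ 2)

/-- Membership in the space `X_ε`. -/
def MemXe {N : ℕ} (s : ℝ) (P : PotSetup N) (ε : ℝ) (u v : Euc N → ℝ) : Prop :=
  MemHs N s u ∧ MemHs N s v ∧
    Integrable (fun x => P.V (ε • x) * u x ^ 2 + P.W (ε • x) * v x ^ 2)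

/-- The penalized energy functional `J_ε`. -/
def Je {N : ℕ} (s : ℝ) {p : ℝ} (QS : QSetup p) (η : ℝ → ℝ) (A : ℝ) (P : PotSetup N)
    (ε : ℝ) (u v : Euc N → ℝ) : ℝ :=
  (1 / 2) * normSqE s P ε u v - ∫ x, Hpen QS η A P.Λ (ε • x) (u x) (v x)

/-- The pairing `⟨J'_ε(u,v),(φ,ψ)⟩`. -/
def pairJe {N : ℕ} (s : ℝ) {p : ℝ} (QS : QSetup p) (η : ℝ → ℝ) (A : ℝ) (P : PotSetup N)
    (ε : ℝ) (u v φ ψ : Euc N → ℝ) : ℝ :=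
  (∫ z : Euc N × Euc N, (u z.1 - u z.2) * (φ z.1 - φ z.2) / ‖z.1 - z.2‖ ^ ((N : ℝ) + 2 * s)) +
  (∫ z : Euc N × Euc N, (v z.1 - v z.2) * (ψ z.1 - ψ z.2) / ‖z.1 - z.2‖ ^ ((N : ℝ) + 2 * s)) +
  (∫ x, (P.V (ε • x) * u x * φ x + P.W (ε • x) * v x * ψ x)) -
  (∫ x, (φ x * HpenU QS η A P.Λ (ε • x) (u x) (v x) +
         ψ x * HpenV QS η A P.Λ (ε • x) (u x) (v x)))

/-- The Nehari manifold `N_ε` of the penalized functional `J_ε`. -/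
def NehariE {N : ℕ} (s : ℝ) {p : ℝ} (QS : QSetup p) (η : ℝ → ℝ) (A : ℝ) (P : PotSetup N)
    (ε : ℝ) : Set ((Euc N → ℝ) × (Euc N → ℝ)) :=
  {w | MemXe s P ε w.1 w.2 ∧ w ≠ (0, 0) ∧
    normSqE s P ε w.1 w.2 =
      ∫ x, (w.1 x * HpenU QS η A P.Λ (ε • x) (w.1 x) (w.2 x) +
            w.2 x * HpenV QS η A P.Λ (ε • x) (w.1 x) (w.2 x))}

end
open Topology

section Helpers

variable {p : ℝ} (QS : QSetup p)

lemma Q_nonneg (hp : 2 < p) : ∀ u v : ℝ, 0 ≤ QS.Q u v := by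
  intro u v
  rcases le_or_gt u 0 with hu | hu
  · rw [QS.ext_zero u v (Or.inl hu)]
  rcases le_or_gt v 0 with hv | hv
  · rw [QS.ext_zero u v (Or.inr hv)]
  exact (QS.q5 u v hu hv).le

/-- Differentiability and Euler identity in the open quadrant. -/
lemma qDiff (hp : 2 < p) {u v : ℝ} (hu : 0 < u) (hv : 0 < v) :
    HasDerivAt (fun t => QS.Q t v) (pdU QS.Q u v) u ∧
    HasDerivAt (fun t => QS.Q u t) (pdV QS.Q u v) v ∧
    u * pdU QS.Q u v + v * pdV QS.Q u v = p * QS.Q u v := by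
  set f : ℝ × ℝ → ℝ := fun z => QS.Q z.1 z.2 with hf
  have hnhds : (Ici (0:ℝ) ×ˢ Ici (0:ℝ)) ∈ 𝓝 ((u, v) : ℝ × ℝ) := by
    apply Filter.mem_of_superset ((isOpen_Ioi.prod isOpen_Ioi).mem_nhds (show (u,v) ∈ Ioi (0:ℝ) ×ˢ Ioi (0:ℝ) from Set.mem_prod.mpr ⟨hu, hv⟩))
    exact Set.prod_mono Ioi_subset_Ici_self Ioi_subset_Ici_self
  have hdf : DifferentiableAt ℝ f (u, v) :=
    (QS.smooth.contDiffAt hnhds).differentiableAt (by norm_num)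
  set D := fderiv ℝ f (u, v) with hD
  have hFD : HasFDerivAt f D (u, v) := hdf.hasFDerivAt
  have h1 : HasDerivAt (fun t => QS.Q t v) (D (1, 0)) u := by
    have := hFD.comp_hasDerivAt u ((hasDerivAt_id u).prodMk (hasDerivAt_const u v))
    exact this
  have h2 : HasDerivAt (fun t => QS.Q u t) (D (0, 1)) v := by
    have := hFD.comp_hasDerivAt v ((hasDerivAt_const v u).prodMk (hasDerivAt_id v))
    exact this
  have hpd1 : pdU QS.Q u v = D (1, 0) := h1.deriv
  have hpd2 : pdV QS.Q u v = D (0, 1) := h2.deriv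
  refine ⟨hpd1 ▸ h1, hpd2 ▸ h2, ?_⟩
  have hFD' : HasFDerivAt f D ((1:ℝ) * u, (1:ℝ) * v) := by simpa using hFD
  have h3 : HasDerivAt (fun t : ℝ => QS.Q (t * u) (t * v)) (D (u, v)) 1 := by
    have hcurve : HasDerivAt (fun t : ℝ => ((t * u, t * v) : ℝ × ℝ)) ((u, v) : ℝ × ℝ) 1 := by
      have := ((hasDerivAt_id (1:ℝ)).mul_const u).prodMk ((hasDerivAt_id (1:ℝ)).mul_const v)
      simpa using this
    have := hFD'.comp_hasDerivAt 1 hcurve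
    exact this
  have h4 : HasDerivAt (fun t : ℝ => t ^ p * QS.Q u v) (p * QS.Q u v) 1 := by
    have := (Real.hasDerivAt_rpow_const (x := (1:ℝ)) (p := p) (Or.inl one_ne_zero)).mul_const
      (QS.Q u v)
    simpa using this
  have hev : (fun t : ℝ => QS.Q (t * u) (t * v)) =ᶠ[𝓝 1] fun t : ℝ => t ^ p * QS.Q u v := by
    filter_upwards [isOpen_Ioi.mem_nhds (show (0:ℝ) < 1 by norm_num)] with t ht
    exact QS.q1 t ht u v hu.le hv.le
  have h5 : HasDerivAt (fun t : ℝ => QS.Q (t * u) (t * v)) (p * QS.Q u v) 1 :=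
    h4.congr_of_eventuallyEq hev
  have huniq : D (u, v) = p * QS.Q u v := h3.unique h5
  have hsplit : ((u, v) : ℝ × ℝ) = u • ((1:ℝ), (0:ℝ)) + v • ((0:ℝ), (1:ℝ)) := by
    simp [Prod.ext_iff]
  have hDval : D (u, v) = u * D (1, 0) + v * D (0, 1) := by
    rw [hsplit, map_add, D.map_smul, D.map_smul]; simp [smul_eq_mul]
  rw [hpd1, hpd2, ← huniq, hDval]

/-- Euler identity everywhere. -/
lemma euler (hp : 2 < p) : ∀ u v : ℝ,
    u * pdU QS.Q u v + v * pdV QS.Q u v = p * QS.Q u v := by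
  intro u v
  rcases lt_trichotomy u 0 with hu | hu | hu
  · have hQ : QS.Q u v = 0 := QS.ext_zero u v (Or.inl hu.le)
    have hpdu : pdU QS.Q u v = 0 := by
      have hev : (fun t => QS.Q t v) =ᶠ[𝓝 u] fun _ => (0:ℝ) := by
        filter_upwards [isOpen_Iio.mem_nhds hu] with t ht
        exact QS.ext_zero t v (Or.inl (le_of_lt ht))
      rw [pdU, hev.deriv_eq, deriv_const]
    have hpdv : pdV QS.Q u v = 0 := by
      have : (fun t => QS.Q u t) = fun _ => (0:ℝ) := by
        funext t; exact QS.ext_zero u t (Or.inl hu.le)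
      rw [pdV, this, deriv_const]
    rw [hQ, hpdu, hpdv]; ring
  · have hQ : QS.Q u v = 0 := QS.ext_zero u v (Or.inl hu.le)
    have hpdv : pdV QS.Q u v = 0 := by
      have : (fun t => QS.Q u t) = fun _ => (0:ℝ) := by
        funext t; exact QS.ext_zero u t (Or.inl hu.le)
      rw [pdV, this, deriv_const]
    rw [hQ, hpdv, hu]; ring
  rcases lt_trichotomy v 0 with hv | hv | hv
  · have hQ : QS.Q u v = 0 := QS.ext_zero u v (Or.inr hv.le)
    have hpdv : pdV QS.Q u v = 0 := by
      have hev : (fun t => QS.Q u t) =ᶠ[𝓝 v] fun _ => (0:ℝ) := by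
        filter_upwards [isOpen_Iio.mem_nhds hv] with t ht
        exact QS.ext_zero u t (Or.inr (le_of_lt ht))
      rw [pdV, hev.deriv_eq, deriv_const]
    have hpdu : pdU QS.Q u v = 0 := by
      have : (fun t => QS.Q t v) = fun _ => (0:ℝ) := by
        funext t; exact QS.ext_zero t v (Or.inr hv.le)
      rw [pdU, this, deriv_const]
    rw [hQ, hpdu, hpdv]; ring
  · have hQ : QS.Q u v = 0 := QS.ext_zero u v (Or.inr hv.le)
    have hpdu : pdU QS.Q u v = 0 := by
      have : (fun t => QS.Q t v) = fun _ => (0:ℝ) := by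
        funext t; exact QS.ext_zero t v (Or.inr hv.le)
      rw [pdU, this, deriv_const]
    rw [hQ, hpdu, hv]; ring
  · exact (qDiff QS hp hu hv).2.2

end Helpers
section Helpers2

variable {a cη : ℝ} (E : EtaSetup a cη)

lemma eta_diff : Differentiable ℝ E.η := E.smooth.differentiable (by norm_num)

lemma eta_deriv_nonpos : ∀ t : ℝ, deriv E.η t ≤ 0 := by
  intro t
  have hd : HasDerivAt E.η (deriv E.η t) t := (eta_diff E t).hasDerivAt
  have h1 : Tendsto (slope E.η t) (𝓝[>] t) (𝓝 (deriv E.η t)) :=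
    (hasDerivAt_iff_tendsto_slope.mp hd).mono_left
      (nhdsWithin_mono _ (fun s hs => ne_of_gt hs))
  refine le_of_tendsto h1 ?_
  filter_upwards [self_mem_nhdsWithin] with s hs
  have : E.η s ≤ E.η t := E.anti (le_of_lt hs)
  rw [slope_def_field]
  exact div_nonpos_of_nonpos_of_nonneg (by linarith) (by simp at hs; linarith)

lemma helper_sigma (c u : ℝ) (h : u ^ 2 + c ^ 2 ≠ 0) :
    HasDerivAt (fun t => Real.sqrt (t ^ 2 + c ^ 2)) (u / Real.sqrt (u ^ 2 + c ^ 2)) u := by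
  have hpos : 0 < u ^ 2 + c ^ 2 := lt_of_le_of_ne (by positivity) (Ne.symm h)
  have hinner : HasDerivAt (fun t : ℝ => t ^ 2 + c ^ 2) (2 * u) u := by
    simpa using (hasDerivAt_pow 2 u).add_const (c ^ 2)
  have := (Real.hasDerivAt_sqrt h).comp u hinner
  have hs : Real.sqrt (u ^ 2 + c ^ 2) > 0 := Real.sqrt_pos.mpr hpos
  rw [show u / Real.sqrt (u ^ 2 + c ^ 2) = 1 / (2 * Real.sqrt (u ^ 2 + c ^ 2)) * (2 * u) by
    rw [div_mul_eq_mul_div, one_mul, mul_div_mul_left _ _ two_ne_zero]]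
  exact this

lemma helper_sigma' (c u : ℝ) (h : c ^ 2 + u ^ 2 ≠ 0) :
    HasDerivAt (fun t => Real.sqrt (c ^ 2 + t ^ 2)) (u / Real.sqrt (c ^ 2 + u ^ 2)) u := by
  have h' : u ^ 2 + c ^ 2 ≠ 0 := by rwa [add_comm]
  have := helper_sigma c u h'
  have hfe : (fun t => Real.sqrt (t ^ 2 + c ^ 2)) = fun t => Real.sqrt (c ^ 2 + t ^ 2) := by
    funext t; rw [add_comm]
  rw [add_comm (c^2) (u^2), ← hfe]
  exact helper_sigma c u h'

lemma helper_eta (c u : ℝ) (h : u ^ 2 + c ^ 2 ≠ 0) :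
    HasDerivAt (fun t => E.η (Real.sqrt (t ^ 2 + c ^ 2)))
      (deriv E.η (Real.sqrt (u ^ 2 + c ^ 2)) * (u / Real.sqrt (u ^ 2 + c ^ 2))) u :=
  ((eta_diff E _).hasDerivAt).comp u (helper_sigma c u h)

lemma helper_eta' (c u : ℝ) (h : c ^ 2 + u ^ 2 ≠ 0) :
    HasDerivAt (fun t => E.η (Real.sqrt (c ^ 2 + t ^ 2)))
      (deriv E.η (Real.sqrt (c ^ 2 + u ^ 2)) * (u / Real.sqrt (c ^ 2 + u ^ 2))) u :=
  ((eta_diff E _).hasDerivAt).comp u (helper_sigma' c u h)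

lemma helper_G (A c u : ℝ) (h : u ^ 2 + c ^ 2 ≠ 0) :
    HasDerivAt (fun t => (1 - E.η (Real.sqrt (t ^ 2 + c ^ 2))) * (A * (t ^ 2 + c ^ 2)))
      (-(deriv E.η (Real.sqrt (u ^ 2 + c ^ 2)) * (u / Real.sqrt (u ^ 2 + c ^ 2))) *
        (A * (u ^ 2 + c ^ 2)) +
        (1 - E.η (Real.sqrt (u ^ 2 + c ^ 2))) * (A * (2 * u))) u := by
  have h1 : HasDerivAt (fun t => 1 - E.η (Real.sqrt (t ^ 2 + c ^ 2)))
      (-(deriv E.η (Real.sqrt (u ^ 2 + c ^ 2)) * (u / Real.sqrt (u ^ 2 + c ^ 2)))) u := by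
    simpa using (helper_eta E c u h).const_sub 1
  have h2 : HasDerivAt (fun t : ℝ => A * (t ^ 2 + c ^ 2)) (A * (2 * u)) u := by
    have : HasDerivAt (fun t : ℝ => t ^ 2 + c ^ 2) (2 * u) u := by
      simpa using (hasDerivAt_pow 2 u).add_const (c ^ 2)
    simpa using this.const_mul A
  exact h1.mul h2

lemma helper_G' (A c u : ℝ) (h : c ^ 2 + u ^ 2 ≠ 0) :
    HasDerivAt (fun t => (1 - E.η (Real.sqrt (c ^ 2 + t ^ 2))) * (A * (c ^ 2 + t ^ 2)))
      (-(deriv E.η (Real.sqrt (c ^ 2 + u ^ 2)) * (u / Real.sqrt (c ^ 2 + u ^ 2))) *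
        (A * (c ^ 2 + u ^ 2)) +
        (1 - E.η (Real.sqrt (c ^ 2 + u ^ 2))) * (A * (2 * u))) u := by
  have h' : u ^ 2 + c ^ 2 ≠ 0 := by rwa [add_comm]
  have := helper_G E A c u h'
  have hfe : (fun t => (1 - E.η (Real.sqrt (t ^ 2 + c ^ 2))) * (A * (t ^ 2 + c ^ 2)))
      = fun t => (1 - E.η (Real.sqrt (c ^ 2 + t ^ 2))) * (A * (c ^ 2 + t ^ 2)) := by
    funext t; rw [add_comm (t^2)]
  rw [hfe, add_comm (u^2)] at this
  exact this

lemma eta_deriv_zero_of_gt {t : ℝ} (ht : 5 * a < t) : deriv E.η t = 0 := by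
  have hev : E.η =ᶠ[𝓝 t] fun _ => (0 : ℝ) := by
    filter_upwards [isOpen_Ioi.mem_nhds ht] with s hs
    exact E.eq_zero s (le_of_lt hs)
  rw [hev.deriv_eq, deriv_const]

end Helpers2
section KeyIneq

variable {p : ℝ} (QS : QSetup p) {a cη : ℝ} (E : EtaSetup a cη)

lemma qhat_ineq (hp : 2 < p) (ha : 0 < a) {A : ℝ} (hA0 : 0 ≤ A)
    (hAp : ∀ u v : ℝ, a ≤ Real.sqrt (u ^ 2 + v ^ 2) → Real.sqrt (u ^ 2 + v ^ 2) ≤ 5 * a →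
      QS.Q u v ≤ A * (u ^ 2 + v ^ 2)) :
    ∀ u v : ℝ, p * Qhat QS E.η A u v ≤
      u * pdU (Qhat QS E.η A) u v + v * pdV (Qhat QS E.η A) u v + (p - 2) * A * (u ^ 2 + v ^ 2) := by
  intro u v
  set r := Real.sqrt (u ^ 2 + v ^ 2) with hr
  by_cases hra : r < a
  · -- near zero: Qhat coincides with Q
    have hopen : IsOpen {t : ℝ | Real.sqrt (t ^ 2 + v ^ 2) < a} :=
      isOpen_lt (Real.continuous_sqrt.comp (by continuity)) continuous_const
    have hopen2 : IsOpen {t : ℝ | Real.sqrt (u ^ 2 + t ^ 2) < a} :=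
      isOpen_lt (Real.continuous_sqrt.comp (by continuity)) continuous_const
    have hpdu : pdU (Qhat QS E.η A) u v = pdU QS.Q u v := by
      have hev : (fun t => Qhat QS E.η A t v) =ᶠ[𝓝 u] fun t => QS.Q t v := by
        filter_upwards [hopen.mem_nhds hra] with t ht
        have ht' : Real.sqrt _ < a := ht
        simp [Qhat, E.eq_one _ (le_of_lt ht')]
      rw [pdU, pdU, hev.deriv_eq]
    have hpdv : pdV (Qhat QS E.η A) u v = pdV QS.Q u v := by
      have hev : (fun t => Qhat QS E.η A u t) =ᶠ[𝓝 v] fun t => QS.Q u t := by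
        filter_upwards [hopen2.mem_nhds hra] with t ht
        have ht' : Real.sqrt _ < a := ht
        simp [Qhat, E.eq_one _ (le_of_lt ht')]
      rw [pdV, pdV, hev.deriv_eq]
    have hQh : Qhat QS E.η A u v = QS.Q u v := by
      rw [Qhat, ← hr, E.eq_one _ (le_of_lt hra)]; ring
    rw [hpdu, hpdv, hQh]
    have he := euler QS hp u v
    nlinarith [mul_nonneg hA0 (by positivity : (0:ℝ) ≤ u^2+v^2)]
  · push_neg at hra
    have hR2 : 0 < u ^ 2 + v ^ 2 := by
      by_contra hc
      push_neg at hc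
      have h0 : u ^ 2 + v ^ 2 = 0 := le_antisymm hc (by positivity)
      rw [hr, h0, Real.sqrt_zero] at hra
      linarith
    have hRne : u ^ 2 + v ^ 2 ≠ 0 := ne_of_gt hR2
    have hr0 : 0 < r := lt_of_lt_of_le ha hra
    have hrne : r ≠ 0 := ne_of_gt hr0
    have hrr : r * r = u ^ 2 + v ^ 2 := Real.mul_self_sqrt (by positivity)
    have key : u * (u / r) + v * (v / r) = r := by
      field_simp
      nlinarith [hrr]
    have hη0 : 0 ≤ E.η r := (E.mem01 r).1
    have hη1 : E.η r ≤ 1 := (E.mem01 r).2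
    have hη' : deriv E.η r ≤ 0 := eta_deriv_nonpos E r
    have hkey : 0 ≤ deriv E.η r * (QS.Q u v - A * (u ^ 2 + v ^ 2)) := by
      by_cases h5 : r ≤ 5 * a
      · have hsub : QS.Q u v - A * (u ^ 2 + v ^ 2) ≤ 0 := by linarith [hAp u v hra h5]
        rw [← neg_mul_neg]
        exact mul_nonneg (neg_nonneg.mpr hη') (neg_nonneg.mpr hsub)
      · push_neg at h5
        rw [eta_deriv_zero_of_gt E h5]
        simp
    by_cases hmain : 0 < u ∧ 0 < v
    · obtain ⟨hu, hv⟩ := hmain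
      obtain ⟨hd1, hd2, heuler⟩ := qDiff QS hp hu hv
      have hpdu : pdU (Qhat QS E.η A) u v =
          deriv E.η r * (u / r) * QS.Q u v + E.η r * pdU QS.Q u v +
            (-(deriv E.η r * (u / r)) * (A * (u ^ 2 + v ^ 2)) +
              (1 - E.η r) * (A * (2 * u))) := by
        have h := ((helper_eta E v u hRne).mul hd1).add (helper_G E A v u hRne)
        exact h.deriv
      have hpdv : pdV (Qhat QS E.η A) u v =
          deriv E.η r * (v / r) * QS.Q u v + E.η r * pdV QS.Q u v +
            (-(deriv E.η r * (v / r)) * (A * (u ^ 2 + v ^ 2)) +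
              (1 - E.η r) * (A * (2 * v))) := by
        have h := ((helper_eta' E u v hRne).mul hd2).add (helper_G' E A u v hRne)
        exact h.deriv
      have hsum : u * pdU (Qhat QS E.η A) u v + v * pdV (Qhat QS E.η A) u v =
          deriv E.η r * r * (QS.Q u v - A * (u ^ 2 + v ^ 2)) + p * (E.η r * QS.Q u v) +
            (1 - E.η r) * (2 * A * (u ^ 2 + v ^ 2)) := by
        rw [hpdu, hpdv]
        linear_combination (deriv E.η r * QS.Q u v - deriv E.η r * (A * (u ^ 2 + v ^ 2))) * key
          + E.η r * heuler
      have hQh : Qhat QS E.η A u v = E.η r * QS.Q u v + (1 - E.η r) * (A * (u ^ 2 + v ^ 2)) := rfl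
      have t1 : 0 ≤ r * (deriv E.η r * (QS.Q u v - A * (u ^ 2 + v ^ 2))) :=
        mul_nonneg hr0.le hkey
      have t2 : 0 ≤ E.η r * (A * (u ^ 2 + v ^ 2)) :=
        mul_nonneg hη0 (mul_nonneg hA0 hR2.le)
      rw [hQh, hsum]
      clear hQh hsum hpdu hpdv hd1 hd2 hAp hkey key heuler hrr
      clear_value r
      nlinarith [t1, t2, mul_nonneg (by linarith : (0:ℝ) ≤ p - 2) t2]
    · have hor : u ≤ 0 ∨ v ≤ 0 := by
        by_contra hc
        push_neg at hc
        exact hmain ⟨hc.1, hc.2⟩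
      have hQ0 : QS.Q u v = 0 := QS.ext_zero u v hor
      have hterm_u : u * pdU (Qhat QS E.η A) u v =
          u * (-(deriv E.η r * (u / r)) * (A * (u ^ 2 + v ^ 2)) +
            (1 - E.η r) * (A * (2 * u))) := by
        rcases lt_trichotomy u 0 with h | h | h
        · have hev : (fun t => Qhat QS E.η A t v) =ᶠ[𝓝 u]
              fun t => (1 - E.η (Real.sqrt (t ^ 2 + v ^ 2))) * (A * (t ^ 2 + v ^ 2)) := by
            filter_upwards [isOpen_Iio.mem_nhds h] with t ht
            have ht' : t < 0 := ht
            simp [Qhat, QS.ext_zero t v (Or.inl ht'.le)]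
          rw [pdU, hev.deriv_eq, (helper_G E A v u hRne).deriv]
        · rw [h]; simp
        · have hv : v ≤ 0 := hor.resolve_left (by linarith)
          have hfe : (fun t => Qhat QS E.η A t v) =
              fun t => (1 - E.η (Real.sqrt (t ^ 2 + v ^ 2))) * (A * (t ^ 2 + v ^ 2)) := by
            funext t; simp [Qhat, QS.ext_zero t v (Or.inr hv)]
          rw [pdU, hfe, (helper_G E A v u hRne).deriv]
      have hterm_v : v * pdV (Qhat QS E.η A) u v =
          v * (-(deriv E.η r * (v / r)) * (A * (u ^ 2 + v ^ 2)) +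
            (1 - E.η r) * (A * (2 * v))) := by
        rcases lt_trichotomy v 0 with h | h | h
        · have hev : (fun t => Qhat QS E.η A u t) =ᶠ[𝓝 v]
              fun t => (1 - E.η (Real.sqrt (u ^ 2 + t ^ 2))) * (A * (u ^ 2 + t ^ 2)) := by
            filter_upwards [isOpen_Iio.mem_nhds h] with t ht
            have ht' : t < 0 := ht
            simp [Qhat, QS.ext_zero u t (Or.inr ht'.le)]
          rw [pdV, hev.deriv_eq, (helper_G' E A u v hRne).deriv]
        · rw [h]; simp
        · have hu : u ≤ 0 := hor.resolve_right (by linarith)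
          have hfe : (fun t => Qhat QS E.η A u t) =
              fun t => (1 - E.η (Real.sqrt (u ^ 2 + t ^ 2))) * (A * (u ^ 2 + t ^ 2)) := by
            funext t; simp [Qhat, QS.ext_zero u t (Or.inl hu)]
          rw [pdV, hfe, (helper_G' E A u v hRne).deriv]
      have hsum : u * pdU (Qhat QS E.η A) u v + v * pdV (Qhat QS E.η A) u v =
          -(deriv E.η r) * r * (A * (u ^ 2 + v ^ 2)) +
            (1 - E.η r) * (2 * A * (u ^ 2 + v ^ 2)) := by
        rw [hterm_u, hterm_v]
        linear_combination (-(deriv E.η r) * (A * (u ^ 2 + v ^ 2))) * key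
      have hQh : Qhat QS E.η A u v = (1 - E.η r) * (A * (u ^ 2 + v ^ 2)) := by
        simp [Qhat, hQ0]; exact Or.inl rfl
      have t1 : 0 ≤ -(deriv E.η r) * r * (A * (u ^ 2 + v ^ 2)) :=
        mul_nonneg (mul_nonneg (neg_nonneg.mpr hη') hr0.le) (mul_nonneg hA0 hR2.le)
      have t2 : 0 ≤ E.η r * (A * (u ^ 2 + v ^ 2)) :=
        mul_nonneg hη0 (mul_nonneg hA0 hR2.le)
      rw [hQh, hsum]
      clear hQh hsum hterm_u hterm_v hAp hkey key hQ0 hrr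
      clear_value r
      nlinarith [t1, t2, mul_nonneg (by linarith : (0:ℝ) ≤ p - 2) t2]

end KeyIneq
section HpenIneq

variable {p : ℝ} (QS : QSetup p) {a cη : ℝ} (E : EtaSetup a cη)

lemma hpen_ineq {N : ℕ} (Λ : Set (Euc N)) (hp : 2 < p) (ha : 0 < a) {A : ℝ} (hA0 : 0 ≤ A)
    (hAp : ∀ u v : ℝ, a ≤ Real.sqrt (u ^ 2 + v ^ 2) → Real.sqrt (u ^ 2 + v ^ 2) ≤ 5 * a →
      QS.Q u v ≤ A * (u ^ 2 + v ^ 2)) :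
    ∀ (x : Euc N) (u v : ℝ), p * Hpen QS E.η A Λ x u v ≤
      u * HpenU QS E.η A Λ x u v + v * HpenV QS E.η A Λ x u v + (p - 2) * A * (u ^ 2 + v ^ 2) := by
  intro x u v
  by_cases hx : x ∈ Λ
  · have h1 : Λ.indicator (fun _ => (1:ℝ)) x = 1 := Set.indicator_of_mem hx _
    have hU : HpenU QS E.η A Λ x u v = pdU QS.Q u v := by
      rw [HpenU, pdU, pdU]
      congr 1
      funext t
      simp [Hpen, h1]
    have hV : HpenV QS E.η A Λ x u v = pdV QS.Q u v := by
      rw [HpenV, pdV, pdV]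
      congr 1
      funext t
      simp [Hpen, h1]
    have hH : Hpen QS E.η A Λ x u v = QS.Q u v := by simp [Hpen, h1]
    rw [hU, hV, hH]
    have he := euler QS hp u v
    nlinarith [mul_nonneg hA0 (by positivity : (0:ℝ) ≤ u ^ 2 + v ^ 2)]
  · have h1 : Λ.indicator (fun _ => (1:ℝ)) x = 0 := Set.indicator_of_notMem hx _
    have hU : HpenU QS E.η A Λ x u v = pdU (Qhat QS E.η A) u v := by
      rw [HpenU, pdU, pdU]
      congr 1
      funext t
      simp [Hpen, h1]
    have hV : HpenV QS E.η A Λ x u v = pdV (Qhat QS E.η A) u v := by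
      rw [HpenV, pdV, pdV]
      congr 1
      funext t
      simp [Hpen, h1]
    have hH : Hpen QS E.η A Λ x u v = Qhat QS E.η A u v := by simp [Hpen, h1]
    rw [hU, hV, hH]
    exact qhat_ineq QS E hp ha hA0 hAp u v

end HpenIneq
section AFacts

variable {p : ℝ} (QS : QSetup p)

lemma qsup (hp : 2 < p) : ∃ M₁ : ℝ, 0 ≤ M₁ ∧
    ∀ u v : ℝ, 0 ≤ u → u ≤ 1 → 0 ≤ v → v ≤ 1 → QS.Q u v ≤ M₁ := by
  have hcont : ContinuousOn (fun z : ℝ × ℝ => QS.Q z.1 z.2) (Icc (0:ℝ) 1 ×ˢ Icc (0:ℝ) 1) :=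
    QS.smooth.continuousOn.mono (Set.prod_mono Icc_subset_Ici_self Icc_subset_Ici_self)
  obtain ⟨zM, hmem, hmax⟩ := IsCompact.exists_isMaxOn (isCompact_Icc.prod isCompact_Icc)
    ⟨((0:ℝ), (0:ℝ)), by simp⟩ hcont
  rw [isMaxOn_iff] at hmax
  refine ⟨QS.Q zM.1 zM.2, ?_, ?_⟩
  · have h0 := hmax ((0:ℝ), (0:ℝ)) (by simp)
    simpa [QS.ext_zero 0 0 (Or.inl le_rfl)] using h0
  · intro u v h1 h2 h3 h4
    exact hmax (u, v) (Set.mem_prod.mpr ⟨⟨h1, h2⟩, ⟨h3, h4⟩⟩)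

lemma aconst_facts {a : ℝ} (hp : 2 < p) (ha : 0 < a) {M₁ : ℝ} (hM0 : 0 ≤ M₁)
    (hM : ∀ u v : ℝ, 0 ≤ u → u ≤ 1 → 0 ≤ v → v ≤ 1 → QS.Q u v ≤ M₁) :
    Aconst QS a ≤ (5 * a) ^ p * M₁ / a ^ 2 ∧
    (0 ≤ Aconst QS a) ∧
    (∀ u v : ℝ, a ≤ Real.sqrt (u ^ 2 + v ^ 2) → Real.sqrt (u ^ 2 + v ^ 2) ≤ 5 * a →
      QS.Q u v ≤ Aconst QS a * (u ^ 2 + v ^ 2)) := by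
  have h5a : 0 < 5 * a := by linarith
  have hB0 : 0 ≤ (5 * a) ^ p * M₁ / a ^ 2 :=
    div_nonneg (mul_nonneg (Real.rpow_nonneg h5a.le p) hM0) (by positivity)
  have helt : ∀ x ∈ ((fun z : ℝ × ℝ => QS.Q z.1 z.2 / (z.1 ^ 2 + z.2 ^ 2)) ''
      {z : ℝ × ℝ | a ≤ Real.sqrt (z.1 ^ 2 + z.2 ^ 2) ∧ Real.sqrt (z.1 ^ 2 + z.2 ^ 2) ≤ 5 * a}),
      x ≤ (5 * a) ^ p * M₁ / a ^ 2 := by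
    rintro x ⟨⟨z1, z2⟩, ⟨h1, h2⟩, rfl⟩
    dsimp only at h1 h2 ⊢
    have hden : a ^ 2 ≤ z1 ^ 2 + z2 ^ 2 := by
      have := pow_le_pow_left₀ ha.le h1 2
      rwa [Real.sq_sqrt (by positivity)] at this
    have hnum : QS.Q z1 z2 ≤ (5 * a) ^ p * M₁ := by
      rcases le_or_gt z1 0 with hz1 | hz1
      · rw [QS.ext_zero z1 z2 (Or.inl hz1)]
        exact mul_nonneg (Real.rpow_nonneg h5a.le p) hM0
      rcases le_or_gt z2 0 with hz2 | hz2
      · rw [QS.ext_zero z1 z2 (Or.inr hz2)]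
        exact mul_nonneg (Real.rpow_nonneg h5a.le p) hM0
      have hz15a : z1 ≤ 5 * a := by
        have h' : z1 = Real.sqrt (z1 ^ 2) := (Real.sqrt_sq hz1.le).symm
        calc z1 = Real.sqrt (z1 ^ 2) := h'
        _ ≤ Real.sqrt (z1 ^ 2 + z2 ^ 2) := Real.sqrt_le_sqrt (by nlinarith)
        _ ≤ 5 * a := h2
      have hz25a : z2 ≤ 5 * a := by
        have h' : z2 = Real.sqrt (z2 ^ 2) := (Real.sqrt_sq hz2.le).symm
        calc z2 = Real.sqrt (z2 ^ 2) := h'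
        _ ≤ Real.sqrt (z1 ^ 2 + z2 ^ 2) := Real.sqrt_le_sqrt (by nlinarith)
        _ ≤ 5 * a := h2
      have hq := QS.q1 (5 * a) h5a (z1 / (5 * a)) (z2 / (5 * a))
        (by positivity) (by positivity)
      rw [mul_div_cancel₀ _ (ne_of_gt h5a), mul_div_cancel₀ _ (ne_of_gt h5a)] at hq
      rw [hq]
      have hb := hM (z1 / (5 * a)) (z2 / (5 * a)) (by positivity)
        ((div_le_one h5a).mpr hz15a) (by positivity) ((div_le_one h5a).mpr hz25a)
      exact mul_le_mul_of_nonneg_left hb (Real.rpow_nonneg h5a.le p)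
    exact div_le_div₀ (mul_nonneg (Real.rpow_nonneg h5a.le p) hM0) hnum (by positivity) hden
  refine ⟨Real.sSup_le helt hB0, Real.sSup_nonneg ?_, ?_⟩
  · rintro x ⟨⟨z1, z2⟩, ⟨h1, h2⟩, rfl⟩
    dsimp only at h1 ⊢
    have hden : (0:ℝ) < z1 ^ 2 + z2 ^ 2 := by
      by_contra hc
      push_neg at hc
      have h0 : z1 ^ 2 + z2 ^ 2 = 0 := le_antisymm hc (by positivity)
      rw [h0, Real.sqrt_zero] at h1
      linarith
    exact div_nonneg (Q_nonneg QS hp z1 z2) hden.le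
  · intro u v h1 h2
    have hden : (0:ℝ) < u ^ 2 + v ^ 2 := by
      by_contra hc
      push_neg at hc
      have h0 : u ^ 2 + v ^ 2 = 0 := le_antisymm hc (by positivity)
      rw [h0, Real.sqrt_zero] at h1
      linarith
    have hmem : QS.Q u v / (u ^ 2 + v ^ 2) ∈
        ((fun z : ℝ × ℝ => QS.Q z.1 z.2 / (z.1 ^ 2 + z.2 ^ 2)) ''
        {z : ℝ × ℝ | a ≤ Real.sqrt (z.1 ^ 2 + z.2 ^ 2) ∧ Real.sqrt (z.1 ^ 2 + z.2 ^ 2) ≤ 5 * a}) :=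
      ⟨(u, v), ⟨h1, h2⟩, rfl⟩
    have := le_csSup ⟨(5 * a) ^ p * M₁ / a ^ 2, helt⟩ hmem
    rw [div_le_iff₀ hden] at this
    exact this

end AFacts

set_option maxHeartbeats 1000000 in
/-- boundedness of Palais-Smale–type sequences for `J_ε`. -/
theorem stmt7 {N : ℕ} (s p : ℝ) (hs : 0 < s ∧ s < 1) (hN : 2 * s < (N : ℝ))
    (hp : 2 < p ∧ p < 2 * (N : ℝ) / ((N : ℝ) - 2 * s))
    (QS : QSetup p) (P : PotSetup N) (cη : ℝ) (hcη : 0 < cη) :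
    ∀ ε : ℝ, 0 < ε → ∃ a₀ > 0, ∀ a : ℝ, 0 < a → a < a₀ → ∀ E : EtaSetup a cη,
      ∀ u v : ℕ → Euc N → ℝ, (∀ n, MemXe s P ε (u n) (v n)) →
      (∃ Cb : ℝ, ∀ n, |Je s QS E.η (Aconst QS a) P ε (u n) (v n)| ≤ Cb) →
      ∀ εs : ℕ → ℝ, Tendsto εs atTop (nhds (0 : ℝ)) →
      (∀ n, |pairJe s QS E.η (Aconst QS a) P ε (u n) (v n) (u n) (v n)| ≤
        εs n * Real.sqrt (normSqE s P ε (u n) (v n))) →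
      ∃ Cb' : ℝ, ∀ n, Real.sqrt (normSqE s P ε (u n) (v n)) ≤ Cb' := by
  intro ε hε
  have hp2 : 2 < p := hp.1
  obtain ⟨M₁, hM0, hM⟩ := qsup QS hp2
  set m : ℝ := min (P.V P.x₀) (P.W P.x₀) with hm_def
  have hm : 0 < m := lt_min P.h3.2.2.1 P.h3.2.2.2
  set δ : ℝ := (p / 2 - 1) * m / (2 * (p - 2)) with hδ_def
  have hδ : 0 < δ := div_pos (mul_pos (by linarith) hm) (by linarith)
  have h5p : (0:ℝ) < 5 ^ p * (M₁ + 1) :=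
    mul_pos (Real.rpow_pos_of_pos (by norm_num) p) (by linarith)
  refine ⟨min 1 ((δ / (5 ^ p * (M₁ + 1))) ^ (p - 2)⁻¹), lt_min one_pos
    (Real.rpow_pos_of_pos (div_pos hδ h5p) _), ?_⟩
  intro a ha haa₀ E u v hmem hJb εs hεs hpair
  obtain ⟨Cb, hCb⟩ := hJb
  have hCb0 : 0 ≤ Cb := le_trans (abs_nonneg _) (hCb 0)
  obtain ⟨S, hS0, hS⟩ : ∃ S : ℝ, 0 ≤ S ∧ ∀ n, |εs n| ≤ S := by
    obtain ⟨R, hR, hRd⟩ := cauchySeq_bdd hεs.cauchySeq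
    refine ⟨R + |εs 0|, by positivity, fun n => ?_⟩
    have h1 := hRd n 0
    rw [Real.dist_eq] at h1
    have h2 : |εs n| ≤ |εs n - εs 0| + |εs 0| := by
      calc |εs n| = |(εs n - εs 0) + εs 0| := by ring_nf
      _ ≤ |εs n - εs 0| + |εs 0| := abs_add_le _ _
    linarith
  obtain ⟨hA_le, hA0, hAp⟩ := aconst_facts QS hp2 ha hM0 hM
  set A : ℝ := Aconst QS a with hA_def
  have hAδ : A ≤ δ := by
    refine le_trans hA_le ?_
    have h1 : (5 * a) ^ p = 5 ^ p * a ^ p := Real.mul_rpow (by norm_num) ha.le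
    have h2 : a ^ p / a ^ (2:ℕ) = a ^ (p - 2) := by
      rw [show a ^ (2:ℕ) = a ^ ((2:ℕ):ℝ) from (Real.rpow_natCast a 2).symm,
        ← Real.rpow_sub ha]
      norm_num
    have key : (5 * a) ^ p * M₁ / a ^ 2 = 5 ^ p * M₁ * a ^ (p - 2) := by
      rw [h1, show 5 ^ p * a ^ p * M₁ / a ^ 2 = 5 ^ p * M₁ * (a ^ p / a ^ 2) by ring, h2]
    rw [key]
    have hle : a ^ (p - 2) ≤ δ / (5 ^ p * (M₁ + 1)) := by
      have haa : a ≤ (δ / (5 ^ p * (M₁ + 1))) ^ (p - 2)⁻¹ :=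
        le_of_lt (lt_of_lt_of_le haa₀ (min_le_right _ _))
      have h3 := Real.rpow_le_rpow ha.le haa (by linarith : (0:ℝ) ≤ p - 2)
      rwa [← Real.rpow_mul (le_of_lt (div_pos hδ h5p)), inv_mul_cancel₀
        (by linarith : p - 2 ≠ 0), Real.rpow_one] at h3
    calc 5 ^ p * M₁ * a ^ (p - 2) ≤ 5 ^ p * (M₁ + 1) * (δ / (5 ^ p * (M₁ + 1))) := by
          apply mul_le_mul (mul_le_mul_of_nonneg_left (by linarith)
            (Real.rpow_nonneg (by norm_num) p)) hle (Real.rpow_nonneg ha.le _) h5p.le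
    _ = δ := by field_simp
  have hmV : ∀ x : Euc N, m ≤ P.V x := fun x => le_trans (min_le_left _ _) (P.h3.1 x)
  have hmW : ∀ x : Euc N, m ≤ P.W x := fun x => le_trans (min_le_right _ _) (P.h3.2.1 x)
  have hPoint := hpen_ineq QS E P.Λ hp2 ha hA0 hAp
  set κ : ℝ := (p / 2 - 1) / 2 with hκ_def
  have hκ : 0 < κ := by
    rw [hκ_def]; linarith
  refine ⟨max (max 1 (Real.sqrt (2 * Cb))) (max S ((p * Cb + S) / κ)), fun n => ?_⟩
  obtain ⟨⟨hu2, hugag⟩, ⟨hv2, hvgag⟩, hVW⟩ := hmem n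
  have hu2i : Integrable (fun y => u n y ^ 2) := hu2.integrable_sq
  have hv2i : Integrable (fun y => v n y ^ 2) := hv2.integrable_sq
  have hgag_u : 0 ≤ gagSq N s (u n) :=
    integral_nonneg fun z => div_nonneg (sq_nonneg _) (Real.rpow_nonneg (norm_nonneg _) _)
  have hgag_v : 0 ≤ gagSq N s (v n) :=
    integral_nonneg fun z => div_nonneg (sq_nonneg _) (Real.rpow_nonneg (norm_nonneg _) _)
  set T : ℝ := normSqE s P ε (u n) (v n) with hT_def
  have hT_eq : T = gagSq N s (u n) + gagSq N s (v n) +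
      ∫ y, (P.V (ε • y) * u n y ^ 2 + P.W (ε • y) * v n y ^ 2) := rfl
  have hVWnn : ∀ y, 0 ≤ P.V (ε • y) * u n y ^ 2 + P.W (ε • y) * v n y ^ 2 := fun y =>
    add_nonneg (mul_nonneg (le_trans hm.le (hmV _)) (sq_nonneg _))
      (mul_nonneg (le_trans hm.le (hmW _)) (sq_nonneg _))
  have hIVW : 0 ≤ ∫ y, (P.V (ε • y) * u n y ^ 2 + P.W (ε • y) * v n y ^ 2) :=
    integral_nonneg hVWnn
  have hT0 : 0 ≤ T := by rw [hT_eq]; linarith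
  set x : ℝ := Real.sqrt T with hx_def
  have hx0 : 0 ≤ x := Real.sqrt_nonneg T
  have hxx : x ^ 2 = T := Real.sq_sqrt hT0
  -- the goal is `x ≤ max ...`
  have hIVW_le_T : (∫ y, (P.V (ε • y) * u n y ^ 2 + P.W (ε • y) * v n y ^ 2)) ≤ T := by
    rw [hT_eq]; linarith
  set I2 : ℝ := ∫ y, (u n y ^ 2 + v n y ^ 2) with hI2_def
  have hI2nn : 0 ≤ I2 := integral_nonneg fun y => by positivity
  have hI2 : m * I2 ≤ T := by
    have h1 : (∫ y, m * (u n y ^ 2 + v n y ^ 2)) = m * I2 := integral_const_mul m _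
    have h2 : (∫ y, m * (u n y ^ 2 + v n y ^ 2)) ≤
        ∫ y, (P.V (ε • y) * u n y ^ 2 + P.W (ε • y) * v n y ^ 2) := by
      apply integral_mono ((hu2i.add hv2i).const_mul m) hVW
      intro y
      have g1 : m * u n y ^ 2 ≤ P.V (ε • y) * u n y ^ 2 :=
        mul_le_mul_of_nonneg_right (hmV (ε • y)) (sq_nonneg _)
      have g2 : m * v n y ^ 2 ≤ P.W (ε • y) * v n y ^ 2 :=
        mul_le_mul_of_nonneg_right (hmW (ε • y)) (sq_nonneg _)
      simp only [Pi.add_apply]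
      linarith
    linarith
  set Df : Euc N → ℝ := fun y => u n y * HpenU QS E.η A P.Λ (ε • y) (u n y) (v n y) +
      v n y * HpenV QS E.η A P.Λ (ε • y) (u n y) (v n y) with hDf_def
  have hpair_eq : pairJe s QS E.η A P ε (u n) (v n) (u n) (v n) = T - ∫ y, Df y := by
    have e1 : (∫ z : Euc N × Euc N, (u n z.1 - u n z.2) * (u n z.1 - u n z.2) /
        ‖z.1 - z.2‖ ^ ((N : ℝ) + 2 * s)) = gagSq N s (u n) := by
      rw [gagSq]; congr 1; funext z; rw [gagKer]; ring
    have e2 : (∫ z : Euc N × Euc N, (v n z.1 - v n z.2) * (v n z.1 - v n z.2) /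
        ‖z.1 - z.2‖ ^ ((N : ℝ) + 2 * s)) = gagSq N s (v n) := by
      rw [gagSq]; congr 1; funext z; rw [gagKer]; ring
    have e3 : (∫ y, (P.V (ε • y) * u n y * u n y + P.W (ε • y) * v n y * v n y)) =
        ∫ y, (P.V (ε • y) * u n y ^ 2 + P.W (ε • y) * v n y ^ 2) := by
      congr 1; funext y; ring
    rw [pairJe, e1, e2, e3, hT_eq]
  have hJe_eq : Je s QS E.η A P ε (u n) (v n) = 1 / 2 * T -
      ∫ y, Hpen QS E.η A P.Λ (ε • y) (u n y) (v n y) := rfl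
  have hpabs := hpair n
  have hpS : εs n * x ≤ S * x := mul_le_mul_of_nonneg_right
    (le_trans (le_abs_self _) (hS n)) hx0
  by_cases hIntD : Integrable Df
  · by_cases hIntH : Integrable (fun y => Hpen QS E.η A P.Λ (ε • y) (u n y) (v n y))
    · -- main case
      have hIH : p * (∫ y, Hpen QS E.η A P.Λ (ε • y) (u n y) (v n y)) ≤
          (∫ y, Df y) + (p - 2) * A * I2 := by
        have h1 : (∫ y, p * Hpen QS E.η A P.Λ (ε • y) (u n y) (v n y)) =
            p * ∫ y, Hpen QS E.η A P.Λ (ε • y) (u n y) (v n y) := integral_const_mul p _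
        have hInt2 : Integrable (fun y : Euc N => (p - 2) * A * (u n y ^ 2 + v n y ^ 2)) := by
          simpa using ((hu2i.add hv2i).const_mul ((p - 2) * A))
        have h2 : (∫ y, (Df y + (p - 2) * A * (u n y ^ 2 + v n y ^ 2))) =
            (∫ y, Df y) + (p - 2) * A * I2 := by
          rw [integral_add hIntD hInt2, integral_const_mul]
        have h3 : (∫ y, p * Hpen QS E.η A P.Λ (ε • y) (u n y) (v n y)) ≤
            ∫ y, (Df y + (p - 2) * A * (u n y ^ 2 + v n y ^ 2)) := by
          apply integral_mono (hIntH.const_mul p) (hIntD.add hInt2)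
          intro y
          exact hPoint (ε • y) (u n y) (v n y)
        rw [h1, h2] at h3
        exact h3
      have hIDub : (∫ y, Df y) ≤ T + S * x := by
        have h1 : -(εs n * x) ≤ pairJe s QS E.η A P ε (u n) (v n) (u n) (v n) :=
          neg_le_of_abs_le hpabs
        rw [hpair_eq] at h1
        linarith
      have hJub : 1 / 2 * T ≤ Cb +
          ∫ y, Hpen QS E.η A P.Λ (ε • y) (u n y) (v n y) := by
        have h1 := (abs_le.mp (hCb n)).2
        rw [hJe_eq] at h1
        linarith
      have hpen2 : (p - 2) * A * I2 ≤ κ * T := by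
        have e1 : (p - 2) * A * I2 ≤ (p - 2) * δ * I2 :=
          mul_le_mul_of_nonneg_right
            (mul_le_mul_of_nonneg_left hAδ (by linarith)) hI2nn
        have e2 : (p - 2) * δ * I2 = κ * (m * I2) := by
          rw [hδ_def, hκ_def]; field_simp [show p - 2 ≠ 0 by linarith]
        have e3 : κ * (m * I2) ≤ κ * T := mul_le_mul_of_nonneg_left hI2 hκ.le
        linarith
      have hJub' : p * (1 / 2 * T) ≤ p * (Cb +
          ∫ y, Hpen QS E.η A P.Λ (ε • y) (u n y) (v n y)) :=
        mul_le_mul_of_nonneg_left hJub (by linarith)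
      have hκT : 2 * (κ * T) = (p / 2 - 1) * T := by rw [hκ_def]; ring
      have hquad : κ * x ^ 2 ≤ p * Cb + S * x := by
        rw [hxx]
        linarith [hIH, hIDub, hJub', hpen2, hκT]
      by_cases hx1 : x ≤ 1
      · exact le_trans hx1 (le_trans (le_max_left _ _) (le_max_left _ _))
      · push_neg at hx1
        have hxpos : 0 < x := lt_trans one_pos hx1
        have hxfin : x ≤ (p * Cb + S) / κ := by
          have e2 : p * Cb ≤ p * Cb * x :=
            le_mul_of_one_le_right (mul_nonneg (by linarith) hCb0) hx1.le
          have h1 : κ * x * x ≤ (p * Cb + S) * x := by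
            calc κ * x * x = κ * x ^ 2 := by ring
            _ ≤ p * Cb + S * x := hquad
            _ ≤ p * Cb * x + S * x := by linarith
            _ = (p * Cb + S) * x := by ring
          have h2 := le_of_mul_le_mul_right h1 hxpos
          rw [le_div_iff₀ hκ]
          linarith
        exact le_trans hxfin (le_trans (le_max_right _ _) (le_max_right _ _))
    · -- H not integrable
      have h0 : (∫ y, Hpen QS E.η A P.Λ (ε • y) (u n y) (v n y)) = 0 := integral_undef hIntH
      have h1 := (abs_le.mp (hCb n)).2
      rw [hJe_eq, h0] at h1
      have hT2 : T ≤ 2 * Cb := by linarith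
      have : x ≤ Real.sqrt (2 * Cb) := Real.sqrt_le_sqrt hT2
      exact le_trans this (le_trans (le_max_right _ _) (le_max_left _ _))
  · -- D not integrable
    have h0 : (∫ y, Df y) = 0 := integral_undef hIntD
    have h1 : T ≤ S * x := by
      have h2 := le_trans (le_abs_self _) hpabs
      rw [hpair_eq, h0] at h2
      linarith
    have hxS : x ≤ S := by
      rcases eq_or_lt_of_le hx0 with h | h
      · linarith
      · have h2 : x * x ≤ S * x := by
          calc x * x = x ^ 2 := by ring
          _ = T := hxx
          _ ≤ S * x := h1
        exact le_of_mul_le_mul_right h2 h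
    exact le_trans hxS (le_trans (le_max_left _ _) (le_max_right _ _))
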